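/- Let p be a prime and k a positive integer. Write every x ∈ {0,1,…,p^k − 1} uniquely as x = rem(x) + quot(x)·p with 0 ≤ rem(x) < p, and define f : ℤ/p^kℤ → ℤ/p^kℤ by f(x) = rem(x) + quot(x). Then f does not agree with any affine map of ℤ/p^kℤ on any subset of size p + 1. Hence the minimum affine approximability of ℤ/p^kℤ is at most p. -/

import Mathlib

/-- The affine approximability of a function `f` on `ℤ/nℤ`: the maximum over affine maps
`x ↦ a * x + b` of the number of points of agreement. -/
noncomputable def affappZMod (n : ℕ) (f : ZMod n → ZMod n) : ℕ :=
  sSup {k | ∃ a b : ZMod n, k = Set.ncard {x | f x = a * x + b}}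

/-- The function `x ↦ rem(x) + quot(x)` on `ℤ/p^kℤ`, where
`x = rem(x) + quot(x)·p` with `0 ≤ rem(x) < p`. -/
def remQuotFun (p k : ℕ) : ZMod (p ^ k) → ZMod (p ^ k) :=
  fun x => ((x.val % p : ℕ) : ZMod (p ^ k)) + ((x.val / p : ℕ) : ZMod (p ^ k))
theorem stmt_15 (p k : ℕ) (hp : p.Prime) (hk : 1 ≤ k) :
    (∀ (a b : ZMod (p ^ k)) (X : Set (ZMod (p ^ k))),
      (∀ x ∈ X, remQuotFun p k x = a * x + b) → X.ncard ≤ p) ∧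
    sInf (Set.range (affappZMod (p ^ k))) ≤ p := by
  have hpk : p ^ k ≠ 0 := pow_ne_zero _ hp.pos.ne'
  haveI : NeZero (p ^ k) := ⟨hpk⟩
  have hnil : ∀ a : ZMod (p ^ k), IsNilpotent (a * (p : ZMod (p ^ k))) := by
    intro a
    refine ⟨k, ?_⟩
    rw [mul_pow]
    have : ((p : ZMod (p ^ k))) ^ k = ((p ^ k : ℕ) : ZMod (p ^ k)) := by push_cast; ring
    rw [this, ZMod.natCast_self, mul_zero]
  have main : ∀ (a b : ZMod (p ^ k)) (X : Set (ZMod (p ^ k))),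
      (∀ x ∈ X, remQuotFun p k x = a * x + b) → X.ncard ≤ p := by
    intro a b X hX
    have hdec : ∀ x : ZMod (p ^ k),
        ((x.val % p : ℕ) : ZMod (p ^ k)) + (p : ZMod (p ^ k)) * ((x.val / p : ℕ) : ZMod (p ^ k)) = x := by
      intro x
      have h := Nat.mod_add_div x.val p
      calc ((x.val % p : ℕ) : ZMod (p ^ k)) + (p : ZMod (p ^ k)) * ((x.val / p : ℕ) : ZMod (p ^ k))
          = ((x.val % p + p * (x.val / p) : ℕ) : ZMod (p ^ k)) := by push_cast; ring
        _ = ((x.val : ℕ) : ZMod (p ^ k)) := by rw [h]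
        _ = x := by simp [ZMod.natCast_val, ZMod.cast_id]
    have hinj : Set.InjOn (fun x : ZMod (p ^ k) => x.val % p) X := by
      intro x hx y hy hxy
      simp only at hxy
      have hfx := hX x hx
      have hfy := hX y hy
      unfold remQuotFun at hfx hfy
      have hsub : ((x.val / p : ℕ) : ZMod (p ^ k)) - ((y.val / p : ℕ) : ZMod (p ^ k))
          = a * (x - y) := by
        rw [hxy] at hfx
        have := congrArg₂ (· - ·) hfx hfy
        rw [show a * x + b - (a * y + b) = a * (x - y) by ring] at this
        rw [← this]; ring
      have hrem : ((x.val % p : ℕ) : ZMod (p ^ k)) = ((y.val % p : ℕ) : ZMod (p ^ k)) := by rw [hxy]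
      have hxy2 : x - y = (p : ZMod (p ^ k)) * (((x.val / p : ℕ) : ZMod (p ^ k)) - ((y.val / p : ℕ) : ZMod (p ^ k))) := by
        linear_combination -hdec x + hdec y + hrem
      set d := ((x.val / p : ℕ) : ZMod (p ^ k)) - ((y.val / p : ℕ) : ZMod (p ^ k)) with hd
      have : d * (1 - a * (p : ZMod (p ^ k))) = 0 := by
        rw [hxy2] at hsub
        linear_combination hsub
      have hd0 : d = 0 := by
        have hu := (hnil a).isUnit_one_sub
        exact hu.mul_left_eq_zero.mp (by linear_combination this)
      have hq : x.val / p = y.val / p := by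
        have hlt1 : x.val / p < p ^ k := lt_of_le_of_lt (Nat.div_le_self _ _) (ZMod.val_lt x)
        have hlt2 : y.val / p < p ^ k := lt_of_le_of_lt (Nat.div_le_self _ _) (ZMod.val_lt y)
        have : ((x.val / p : ℕ) : ZMod (p ^ k)) = ((y.val / p : ℕ) : ZMod (p ^ k)) := by
          have := sub_eq_zero.mp hd0
          exact this
        have := congrArg ZMod.val this
        rwa [ZMod.val_cast_of_lt hlt1, ZMod.val_cast_of_lt hlt2] at this
      have hv : x.val = y.val := by
        conv_lhs => rw [← Nat.mod_add_div x.val p]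
        conv_rhs => rw [← Nat.mod_add_div y.val p]
        rw [hxy, hq]
      exact ZMod.val_injective _ hv
    have hcard := Set.ncard_le_ncard_of_injOn (t := Set.Iio p) (fun x : ZMod (p ^ k) => x.val % p)
      (fun x _ => Nat.mod_lt _ hp.pos) hinj (Set.finite_Iio p)
    have hIio : (Set.Iio p).ncard = p := by
      rw [Set.ncard_eq_toFinset_card']
      simp
    rwa [hIio] at hcard
  refine ⟨main, ?_⟩
  have hle : affappZMod (p ^ k) (remQuotFun p k) ≤ p := by
    apply csSup_le
    · exact ⟨_, 0, 0, rfl⟩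
    · rintro n ⟨a, b, rfl⟩
      exact main a b _ (fun x hx => hx)
  exact le_trans (csInf_le (OrderBot.bddBelow _) ⟨_, rfl⟩) hle
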